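/- arXiv:2512.01811 — 2 statements merged into one kernel-verified Lean document; each statement's English description precedes it below -/
import Mathlib

section
/- Let (I,(c_σ)) be a Hermitian fractional ideal over a number field K of degree d. If d̂eg(I,c) ≥ 0, then h⁰(I,c) ≤ 1 + d̂eg(I,c). -/
open scoped NumberField nonZeroDivisors ENNReal

/-- The theta invariant `h⁰(I, c)` of a Hermitian fractional ideal `(I, (c_σ))` over a number
field `K`:  `h⁰(I, c) = log ∑_{x ∈ I} exp (-π ∑_{σ : K ↪ ℂ} c_σ² |σ x|²)`. -/
noncomputable def hermitianH0 (K : Type*) [Field K] [NumberField K]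
    (I : FractionalIdeal (𝓞 K)⁰ K) (c : (K →+* ℂ) → ℝ) : ℝ :=
  Real.log (∑' x : I,
    Real.exp (-Real.pi * ∑ σ : K →+* ℂ, c σ ^ 2 * ‖σ (x : K)‖ ^ 2))

/-- The arithmetic degree `d̂eg(I, c)` of a Hermitian fractional ideal `(I, (c_σ))` over a number
field `K`:  `d̂eg(I, c) = -log N(I) - ∑_{σ : K ↪ ℂ} log c_σ`, where `N(I)` is the absolute norm
of the fractional ideal `I`. -/
noncomputable def hermitianDeg (K : Type*) [Field K] [NumberField K]
    (I : FractionalIdeal (𝓞 K)⁰ K) (c : (K →+* ℂ) → ℝ) : ℝ :=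
  -Real.log (FractionalIdeal.absNorm I : ℝ) - ∑ σ : K →+* ℂ, Real.log (c σ)

open MeasureTheory Module Finset Set in
/-- Packing bound: a `lam`-separated finite set inside the ball of radius `R` in a
finite-dimensional real normed space has at most `((2R+lam)/lam) ^ dim` elements. -/
lemma packing_card_le {V : Type*} [NormedAddCommGroup V] [NormedSpace ℝ V]
    [FiniteDimensional ℝ V] (s : Finset V) {lam R : ℝ} (hlam : 0 < lam) (hR : 0 ≤ R)
    (hsep : ∀ p ∈ s, ∀ q ∈ s, p ≠ q → lam ≤ dist p q)
    (hball : ∀ p ∈ s, ‖p‖ ≤ R) :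
    (s.card : ℝ) ≤ ((2 * R + lam) / lam) ^ (finrank ℝ V) := by
  have hbase1 : (1:ℝ) ≤ (2 * R + lam) / lam := by
    rw [le_div_iff₀ hlam]; linarith
  rcases subsingleton_or_nontrivial V with hV | hV
  · have h1 : s.card ≤ 1 := Finset.card_le_one.mpr (fun a _ b _ => Subsingleton.elim a b)
    calc (s.card : ℝ) ≤ 1 := by exact_mod_cast h1
      _ = 1 ^ (finrank ℝ V) := (one_pow _).symm
      _ ≤ _ := pow_le_pow_left₀ zero_le_one hbase1 _
  · borelize V
    set n := finrank ℝ V with hn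
    set μ : Measure V := (finBasis ℝ V).addHaar with hμ
    have hd : Set.PairwiseDisjoint (s : Set V) (fun p => Metric.ball p (lam / 2)) := by
      intro p hp q hq hpq
      exact Metric.ball_disjoint_ball (by
        have := hsep p hp q hq hpq; linarith)
    have hsub : (⋃ p ∈ s, Metric.ball p (lam / 2)) ⊆ Metric.ball 0 (R + lam / 2) := by
      simp only [Set.iUnion_subset_iff]
      intro p hp x hx
      simp only [Metric.mem_ball, dist_zero_right] at *
      have h2 : ‖x - p‖ < lam / 2 := by rw [← dist_eq_norm]; exact hx
      have h1 : ‖x‖ ≤ ‖p‖ + ‖x - p‖ := by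
        calc ‖x‖ = ‖p + (x - p)‖ := by congr 1; abel
          _ ≤ _ := norm_add_le _ _
      have := hball p hp
      linarith
    have hcount : (s.card : ℝ≥0∞) * μ (Metric.ball 0 (lam/2)) ≤ μ (Metric.ball 0 (R + lam/2)) := by
      calc (s.card : ℝ≥0∞) * μ (Metric.ball 0 (lam/2))
          = ∑ p ∈ s, μ (Metric.ball p (lam/2)) := by
            rw [Finset.sum_congr rfl (fun p _ => Measure.addHaar_ball_center μ p _),
              Finset.sum_const, nsmul_eq_mul]
        _ = μ (⋃ p ∈ s, Metric.ball p (lam/2)) :=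
            (measure_biUnion_finset hd (fun p _ => measurableSet_ball)).symm
        _ ≤ μ (Metric.ball 0 (R + lam/2)) := measure_mono hsub
    rw [Measure.addHaar_ball μ 0 (by positivity : (0:ℝ) ≤ lam/2),
      Measure.addHaar_ball μ 0 (by positivity : (0:ℝ) ≤ R + lam/2), ← mul_assoc] at hcount
    have hμpos : μ (Metric.ball (0:V) 1) ≠ 0 := (Metric.measure_ball_pos μ 0 one_pos).ne'
    have hμtop : μ (Metric.ball (0:V) 1) ≠ ⊤ := measure_ball_lt_top.ne
    have hcount2 : (s.card : ℝ≥0∞) * ENNReal.ofReal ((lam/2) ^ n)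
        ≤ ENNReal.ofReal ((R + lam/2) ^ n) :=
      (ENNReal.mul_le_mul_iff_left hμpos hμtop).mp hcount
    have hreal : (s.card : ℝ) * (lam/2) ^ n ≤ (R + lam/2) ^ n := by
      have h3 : ENNReal.ofReal ((s.card : ℝ) * (lam/2) ^ n)
          ≤ ENNReal.ofReal ((R + lam/2) ^ n) := by
        rwa [ENNReal.ofReal_mul (by positivity), ENNReal.ofReal_natCast]
      exact (ENNReal.ofReal_le_ofReal_iff (by positivity)).mp h3
    rw [div_pow, le_div_iff₀ (by positivity)]
    calc (s.card : ℝ) * lam ^ n = ((s.card : ℝ) * (lam/2) ^ n) * 2 ^ n := by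
          rw [mul_assoc, ← mul_pow]; ring_nf
      _ ≤ (R + lam/2) ^ n * 2 ^ n :=
          mul_le_mul_of_nonneg_right hreal (by positivity)
      _ = (2 * R + lam) ^ n := by rw [← mul_pow]; ring_nf

/-- The key Gamma-function estimate `Γ(d/2+1) ≤ (e-1)·(πd/9)^(d/2)`. -/
lemma gamma_le_aux : ∀ d : ℕ, 1 ≤ d →
    Real.Gamma ((d:ℝ)/2 + 1) ≤ (Real.exp 1 - 1) * (Real.pi * d / 9) ^ ((d:ℝ)/2) := by
  intro d
  induction d using Nat.strong_induction_on with
  | _ d ih =>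
    match d with
    | 0 => intro h; exact absurd h (by norm_num)
    | 1 =>
      intro _
      have hG : Real.Gamma (((1:ℕ):ℝ)/2 + 1) = Real.sqrt Real.pi / 2 := by
        rw [show (((1:ℕ):ℝ)/2 : ℝ) = 1/2 by norm_num,
          Real.Gamma_add_one (by norm_num), Real.Gamma_one_half_eq]
        ring
      have h9 : Real.sqrt 9 = 3 := by
        rw [show (9:ℝ) = 3^2 by norm_num, Real.sqrt_sq (by norm_num : (0:ℝ) ≤ 3)]
      have hR : (Real.pi * ((1:ℕ):ℝ) / 9) ^ (((1:ℕ):ℝ)/2) = Real.sqrt Real.pi / 3 := by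
        rw [show (((1:ℕ):ℝ)/2 : ℝ) = 1/2 by norm_num, ← Real.sqrt_eq_rpow,
          show Real.pi * ((1:ℕ):ℝ) / 9 = Real.pi / 9 by norm_num,
          Real.sqrt_div Real.pi_pos.le, h9]
      rw [hG, hR]
      nlinarith [Real.sqrt_pos.mpr Real.pi_pos, Real.exp_one_gt_d9]
    | 2 =>
      intro _
      rw [show (((2:ℕ):ℝ)/2 : ℝ) = 1 by norm_num, Real.Gamma_add_one (by norm_num),
        Real.Gamma_one, mul_one, Real.rpow_one]
      nlinarith [Real.pi_gt_d6, Real.exp_one_gt_d9]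
    | 3 =>
      intro _
      have hG : Real.Gamma (((3:ℕ):ℝ)/2 + 1) = 3/4 * Real.sqrt Real.pi := by
        rw [show (((3:ℕ):ℝ)/2 : ℝ) = 3/2 by norm_num,
          Real.Gamma_add_one (by norm_num), show (3:ℝ)/2 = 1/2 + 1 by norm_num,
          Real.Gamma_add_one (by norm_num), Real.Gamma_one_half_eq]
        ring
      have h3 : Real.sqrt 3 ≤ 1.74 := by
        nlinarith [Real.sq_sqrt (by norm_num : (0:ℝ) ≤ 3), Real.sqrt_nonneg 3]
      have h3' : (0:ℝ) < Real.sqrt 3 := Real.sqrt_pos.mpr (by norm_num)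
      have hsp : (0:ℝ) < Real.sqrt Real.pi := Real.sqrt_pos.mpr Real.pi_pos
      have hR : (Real.pi * ((3:ℕ):ℝ) / 9) ^ (((3:ℕ):ℝ)/2)
          = Real.pi / 3 * (Real.sqrt Real.pi / Real.sqrt 3) := by
        rw [show Real.pi * ((3:ℕ):ℝ) / 9 = Real.pi / 3 by push_cast; ring,
          show (((3:ℕ):ℝ)/2 : ℝ) = 1 + 1/2 by norm_num,
          Real.rpow_add (by positivity), Real.rpow_one, ← Real.sqrt_eq_rpow,
          Real.sqrt_div Real.pi_pos.le]
      rw [hG, hR]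
      have key : (3:ℝ)/4 * Real.sqrt 3 * 3 ≤ (Real.exp 1 - 1) * Real.pi := by
        nlinarith [Real.pi_gt_d6, Real.exp_one_gt_d9]
      rw [show (Real.exp 1 - 1) * (Real.pi/3*(Real.sqrt Real.pi/Real.sqrt 3))
        = ((Real.exp 1 - 1) * Real.pi * Real.sqrt Real.pi) / (3 * Real.sqrt 3) by ring,
        le_div_iff₀ (by positivity)]
      nlinarith [mul_le_mul_of_nonneg_right key hsp.le]
    | 4 =>
      intro _
      have hG : Real.Gamma (((4:ℕ):ℝ)/2 + 1) = 2 := by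
        rw [show (((4:ℕ):ℝ)/2 : ℝ) = 2 by norm_num, Real.Gamma_add_one (by norm_num),
          show (2:ℝ) = 1 + 1 by norm_num, Real.Gamma_add_one (by norm_num), Real.Gamma_one]
        ring
      rw [hG, show (((4:ℕ):ℝ)/2 : ℝ) = ((2:ℕ):ℝ) by norm_num, Real.rpow_natCast]
      nlinarith [Real.pi_gt_d6, Real.exp_one_gt_d9]
    | (n+5) =>
      intro _
      have ih3 := ih (n+3) (by omega) (by omega)
      have he1 : (0:ℝ) ≤ Real.exp 1 - 1 := by nlinarith [Real.exp_one_gt_d9]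
      have hx0 : (0:ℝ) ≤ (n:ℝ) := Nat.cast_nonneg n
      push_cast at ih3 ⊢
      have h1 : ((n:ℝ)+5)/2 + 1 = (((n:ℝ)+3)/2 + 1) + 1 := by ring
      rw [h1, Real.Gamma_add_one (by positivity)]
      have hB1 : (0:ℝ) < Real.pi * ((n:ℝ)+3) / 9 := by positivity
      have hA1 : (0:ℝ) < Real.pi * ((n:ℝ)+5) / 9 := by positivity
      have key : ((n:ℝ)+5)/2 * (Real.pi * ((n:ℝ)+3)/9) ^ (((n:ℝ)+3)/2)
          ≤ (Real.pi * ((n:ℝ)+5)/9) ^ (((n:ℝ)+5)/2) := by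
        have e1 : (Real.pi * ((n:ℝ)+5)/9) ^ (((n:ℝ)+5)/2)
            = (Real.pi * ((n:ℝ)+5)/9) ^ (((n:ℝ)+3)/2) * (Real.pi * ((n:ℝ)+5)/9) := by
          rw [show ((n:ℝ)+5)/2 = ((n:ℝ)+3)/2 + 1 by ring, Real.rpow_add hA1, Real.rpow_one]
        have e2 : (Real.pi * ((n:ℝ)+3)/9) ^ (((n:ℝ)+3)/2) * (1 + ((n:ℝ)+3)/((n:ℝ)+5))
            ≤ (Real.pi * ((n:ℝ)+5)/9) ^ (((n:ℝ)+3)/2) := by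
          have hq : (Real.pi * ((n:ℝ)+5)/9) ^ (((n:ℝ)+3)/2)
              = (Real.pi * ((n:ℝ)+3)/9) ^ (((n:ℝ)+3)/2)
                * ((((n:ℝ)+5))/(((n:ℝ)+3))) ^ (((n:ℝ)+3)/2) := by
            rw [← Real.mul_rpow hB1.le (by positivity)]
            congr 1
            field_simp
          rw [hq]
          apply mul_le_mul_of_nonneg_left _ (Real.rpow_nonneg hB1.le _)
          have h5 : (0:ℝ) < ((n:ℝ)+5)/((n:ℝ)+3) := by positivity
          rw [Real.rpow_def_of_pos h5]
          have hlog2 : 2/((n:ℝ)+5) ≤ Real.log (((n:ℝ)+5)/((n:ℝ)+3)) := by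
            have h2 : Real.log (((n:ℝ)+3)/((n:ℝ)+5)) ≤ ((n:ℝ)+3)/((n:ℝ)+5) - 1 :=
              Real.log_le_sub_one_of_pos (by positivity)
            have h3 : Real.log (((n:ℝ)+5)/((n:ℝ)+3)) = - Real.log (((n:ℝ)+3)/((n:ℝ)+5)) := by
              rw [← Real.log_inv]
              congr 1
              rw [inv_div]
            have h4 : ((n:ℝ)+3)/((n:ℝ)+5) - 1 = -(2/((n:ℝ)+5)) := by
              field_simp
              all_goals ring_nf
              all_goals norm_num
            rw [h3]
            rw [h4] at h2
            linarith
          calc 1 + ((n:ℝ)+3)/((n:ℝ)+5) ≤ Real.exp (((n:ℝ)+3)/((n:ℝ)+5)) := by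
                have := Real.add_one_le_exp (((n:ℝ)+3)/((n:ℝ)+5))
                linarith
            _ ≤ Real.exp (Real.log (((n:ℝ)+5)/((n:ℝ)+3)) * (((n:ℝ)+3)/2)) := by
                rw [Real.exp_le_exp]
                calc ((n:ℝ)+3)/((n:ℝ)+5) = (2/((n:ℝ)+5)) * (((n:ℝ)+3)/2) := by ring
                  _ ≤ _ := mul_le_mul_of_nonneg_right hlog2 (by positivity)
        have hfin : ((n:ℝ)+5)/2 ≤ (1 + ((n:ℝ)+3)/((n:ℝ)+5)) * (Real.pi * ((n:ℝ)+5)/9) := by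
          have heq : (1 + ((n:ℝ)+3)/((n:ℝ)+5)) * (Real.pi * ((n:ℝ)+5)/9)
              = Real.pi * (2*(n:ℝ)+8)/9 := by
            field_simp
            all_goals ring_nf
            all_goals norm_num
          rw [heq]
          nlinarith [Real.pi_gt_d6]
        calc ((n:ℝ)+5)/2 * (Real.pi * ((n:ℝ)+3)/9) ^ (((n:ℝ)+3)/2)
            ≤ ((1 + ((n:ℝ)+3)/((n:ℝ)+5)) * (Real.pi * ((n:ℝ)+5)/9))
              * (Real.pi * ((n:ℝ)+3)/9) ^ (((n:ℝ)+3)/2) :=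
              mul_le_mul_of_nonneg_right hfin (Real.rpow_nonneg hB1.le _)
          _ = (Real.pi * ((n:ℝ)+5)/9)
              * ((Real.pi * ((n:ℝ)+3)/9) ^ (((n:ℝ)+3)/2) * (1 + ((n:ℝ)+3)/((n:ℝ)+5))) := by
              ring
          _ ≤ (Real.pi * ((n:ℝ)+5)/9) * (Real.pi * ((n:ℝ)+5)/9) ^ (((n:ℝ)+3)/2) :=
              mul_le_mul_of_nonneg_left e2 hA1.le
          _ = (Real.pi * ((n:ℝ)+5)/9) ^ (((n:ℝ)+5)/2) := by rw [e1]; ring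
      calc (((n:ℝ)+3)/2 + 1) * Real.Gamma (((n:ℝ)+3)/2 + 1)
          ≤ (((n:ℝ)+3)/2 + 1) * ((Real.exp 1 - 1) * (Real.pi * ((n:ℝ)+3)/9) ^ (((n:ℝ)+3)/2)) :=
            mul_le_mul_of_nonneg_left ih3 (by positivity)
        _ = (Real.exp 1 - 1) * (((n:ℝ)+5)/2 * (Real.pi * ((n:ℝ)+3)/9) ^ (((n:ℝ)+3)/2)) := by
            ring
        _ ≤ (Real.exp 1 - 1) * (Real.pi * ((n:ℝ)+5)/9) ^ (((n:ℝ)+5)/2) :=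
            mul_le_mul_of_nonneg_left key he1

open MeasureTheory Finset Module in
/-- Gaussian sum bound for separated points in a finite-dimensional normed space. -/
lemma sum_exp_le {V : Type*} [NormedAddCommGroup V] [NormedSpace ℝ V] [FiniteDimensional ℝ V]
    (d : ℕ) (hd : 1 ≤ d) (hn : finrank ℝ V ≤ d) {τ : ℝ} (hτ : 0 < τ)
    (F : Finset V)
    (hsep : ∀ p ∈ F, ∀ q ∈ F, p ≠ q → Real.sqrt d * τ ≤ dist p q)
    (hmin : ∀ p ∈ F, Real.sqrt d * τ ≤ ‖p‖) :
    ∑ p ∈ F, Real.exp (-Real.pi * ‖p‖^2) ≤ (Real.exp 1 - 1) / τ ^ d := by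
  classical
  have hdpos : (0:ℝ) < d := by exact_mod_cast hd
  set lam : ℝ := Real.sqrt d * τ with hlam_def
  have hlam : 0 < lam := mul_pos (Real.sqrt_pos.mpr hdpos) hτ
  set gg : ℝ → ℝ := fun s => Real.pi * Real.exp (-Real.pi * s) with hgg_def
  have hgg0 : ∀ s, 0 ≤ gg s := fun s => by
    rw [hgg_def]; positivity
  have hgg_int : ∀ b : ℝ, IntegrableOn gg (Set.Ioi b) := fun b =>
    (exp_neg_integrableOn_Ioi b Real.pi_pos).const_mul Real.pi
  -- basic integral identity
  have hsingle : ∀ b : ℝ, ∫ s in Set.Ioi b, gg s = Real.exp (-Real.pi * b) := by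
    intro b
    have hderiv : ∀ x ∈ Set.Ici b, HasDerivAt (fun s : ℝ => -Real.exp (-Real.pi * s)) (gg x) x := by
      intro x _
      have h1 : HasDerivAt (fun s : ℝ => -Real.pi * s) (-Real.pi) x := by
        simpa using (hasDerivAt_id x).const_mul (-Real.pi)
      have h2 := (h1.exp).neg
      exact h2.congr_deriv (by simp only [hgg_def]; ring)
    have hinner : Filter.Tendsto (fun s : ℝ => -Real.pi * s) Filter.atTop Filter.atBot := by
      have hmul : Filter.Tendsto (fun s : ℝ => Real.pi * s) Filter.atTop Filter.atTop :=
        Filter.Tendsto.const_mul_atTop Real.pi_pos Filter.tendsto_id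
      exact Filter.Tendsto.congr (fun s => by simp only [Function.comp_apply]; ring)
        (Filter.tendsto_neg_atTop_atBot.comp hmul)
    have htend : Filter.Tendsto (fun s : ℝ => -Real.exp (-Real.pi * s))
        Filter.atTop (nhds 0) := by
      rw [show (0:ℝ) = -0 by norm_num]
      exact (Real.tendsto_exp_atBot.comp hinner).neg
    have := MeasureTheory.integral_Ioi_of_hasDerivAt_of_tendsto
      (Continuous.continuousWithinAt (by continuity))
      (fun x hx => hderiv x (Set.mem_Ici.mpr (le_of_lt hx))) (hgg_int b) htend
    rw [this]; ring
  -- layer cake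
  have hcake : ∑ p ∈ F, Real.exp (-Real.pi * ‖p‖^2)
      = ∫ s in Set.Ioi (0:ℝ), ∑ p ∈ F, Set.indicator (Set.Ioi (‖p‖^2)) gg s := by
    rw [MeasureTheory.integral_finset_sum _
      (fun p _ => (hgg_int 0).indicator measurableSet_Ioi)]
    refine Finset.sum_congr rfl (fun p hp => ?_)
    have hb : (0:ℝ) < ‖p‖^2 := by
      have h1 := hmin p hp
      nlinarith
    rw [MeasureTheory.integral_indicator measurableSet_Ioi,
      Measure.restrict_restrict measurableSet_Ioi,
      Set.inter_eq_self_of_subset_left (Set.Ioi_subset_Ioi hb.le), hsingle]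
  rw [hcake]
  -- integrable comparison function
  have hcore_int : IntegrableOn (fun s : ℝ => s ^ ((d:ℝ)/2) * Real.exp (-Real.pi * s))
      (Set.Ioi 0) := by
    have hgamma := Real.GammaIntegral_convergent (s := (d:ℝ)/2 + 1) (by positivity)
    simp only [add_sub_cancel_right] at hgamma
    apply MeasureTheory.Integrable.mono hgamma
    · refine ContinuousOn.aestronglyMeasurable ?_ measurableSet_Ioi
      exact (continuousOn_id.rpow_const (fun x hx => Or.inl (ne_of_gt hx))).mul
        (Continuous.continuousOn (by continuity))
    · refine (MeasureTheory.ae_restrict_iff' measurableSet_Ioi).mpr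
        (Filter.Eventually.of_forall (fun x hx => ?_))
      have hx0 : (0:ℝ) < x := hx
      have h1 : Real.exp (-Real.pi * x) ≤ Real.exp (-x) := by
        rw [Real.exp_le_exp]
        nlinarith [Real.pi_gt_d6]
      rw [Real.norm_eq_abs, Real.norm_eq_abs, abs_of_nonneg (by positivity),
        abs_of_nonneg (by positivity), mul_comm (Real.exp (-x))]
      exact mul_le_mul_of_nonneg_left h1 (Real.rpow_nonneg hx0.le _)
  -- pointwise bound and integral comparison
  have hmono : ∫ s in Set.Ioi (0:ℝ), ∑ p ∈ F, Set.indicator (Set.Ioi (‖p‖^2)) gg s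
      ≤ ∫ s in Set.Ioi (0:ℝ),
          (3/lam)^d * Real.pi * (s ^ ((d:ℝ)/2) * Real.exp (-Real.pi * s)) := by
    apply MeasureTheory.setIntegral_mono_on
    · exact MeasureTheory.integrable_finset_sum _
        (fun p _ => (hgg_int 0).indicator measurableSet_Ioi)
    · simpa [mul_assoc, IntegrableOn] using (hcore_int.const_mul ((3/lam)^d * Real.pi))
    · exact measurableSet_Ioi
    · intro s hs
      have hs0 : (0:ℝ) < s := hs
      have hL : ∑ p ∈ F, Set.indicator (Set.Ioi (‖p‖^2)) gg s
          = ((F.filter (fun p => ‖p‖^2 < s)).card : ℝ) * gg s := by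
        have h0 : ∀ p : V, Set.indicator (Set.Ioi (‖p‖^2)) gg s
            = if ‖p‖^2 < s then gg s else 0 := by
          intro p; simp [Set.indicator_apply, Set.mem_Ioi]
        simp_rw [h0]
        rw [← Finset.sum_filter, Finset.sum_const, nsmul_eq_mul]
      rw [hL]
      have hcard : ((F.filter (fun p => ‖p‖^2 < s)).card : ℝ) ≤ (3 * Real.sqrt s / lam) ^ d := by
        by_cases hcase : s ≤ lam^2
        · have hempty : (F.filter (fun p => ‖p‖^2 < s)) = ∅ := by
            rw [Finset.filter_eq_empty_iff]
            intro p hp hlt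
            have h1 := hmin p hp
            nlinarith [norm_nonneg p]
          rw [hempty]
          simpa using pow_nonneg (by positivity : (0:ℝ) ≤ 3 * Real.sqrt s / lam) d
        · push_neg at hcase
          have hls : lam ≤ Real.sqrt s := by
            rw [show lam = Real.sqrt (lam^2) by rw [Real.sqrt_sq hlam.le]]
            exact Real.sqrt_le_sqrt hcase.le
          have hpack := packing_card_le (F.filter (fun p => ‖p‖^2 < s)) hlam
            (Real.sqrt_nonneg s)
            (fun p hp q hq hpq => hsep p (Finset.mem_of_mem_filter p hp) q
              (Finset.mem_of_mem_filter q hq) hpq)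
            (fun p hp => by
              have h1 : ‖p‖^2 < s := (Finset.mem_filter.mp hp).2
              exact (Real.le_sqrt (norm_nonneg p) hs0.le).mpr h1.le)
          calc ((F.filter (fun p => ‖p‖^2 < s)).card : ℝ)
              ≤ ((2 * Real.sqrt s + lam) / lam) ^ (finrank ℝ V) := hpack
            _ ≤ (3 * Real.sqrt s / lam) ^ (finrank ℝ V) := by
                apply pow_le_pow_left₀ (by positivity)
                gcongr
                linarith
            _ ≤ (3 * Real.sqrt s / lam) ^ d := by
                apply pow_le_pow_right₀ ?_ hn
                rw [le_div_iff₀ hlam]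
                nlinarith [Real.sqrt_nonneg s]
      calc ((F.filter (fun p => ‖p‖^2 < s)).card : ℝ) * gg s
          ≤ (3 * Real.sqrt s / lam) ^ d * gg s :=
            mul_le_mul_of_nonneg_right hcard (hgg0 s)
        _ = (3/lam)^d * Real.pi * (s ^ ((d:ℝ)/2) * Real.exp (-Real.pi * s)) := by
            have hsqrt : (Real.sqrt s) ^ d = s ^ ((d:ℝ)/2) := by
              rw [Real.sqrt_eq_rpow, ← Real.rpow_natCast (s ^ ((1:ℝ)/2)) d,
                ← Real.rpow_mul hs0.le]
              congr 1; ring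
            rw [hgg_def, show 3 * Real.sqrt s / lam = 3/lam * Real.sqrt s by ring,
              mul_pow, hsqrt]
            ring
  -- compute the comparison integral
  have hval : ∫ s in Set.Ioi (0:ℝ), (3/lam)^d * Real.pi * (s ^ ((d:ℝ)/2) * Real.exp (-Real.pi * s))
      = (3/lam)^d * Real.pi * ∫ s in Set.Ioi (0:ℝ), s ^ ((d:ℝ)/2) * Real.exp (-Real.pi * s) :=
    MeasureTheory.integral_const_mul _ _
  have hGammaInt : ∫ s in Set.Ioi (0:ℝ), s ^ ((d:ℝ)/2) * Real.exp (-Real.pi * s)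
      = (Real.pi ^ ((d:ℝ)/2))⁻¹ * Real.pi⁻¹ * Real.Gamma ((d:ℝ)/2 + 1) := by
    have hscale := MeasureTheory.integral_comp_mul_left_Ioi
      (fun x : ℝ => x ^ ((d:ℝ)/2) * Real.exp (-x)) 0 Real.pi_pos
    rw [mul_zero] at hscale
    have hgamma_eq : ∫ x in Set.Ioi (0:ℝ), x ^ ((d:ℝ)/2) * Real.exp (-x)
        = Real.Gamma ((d:ℝ)/2 + 1) := by
      rw [Real.Gamma_eq_integral (by positivity : (0:ℝ) < (d:ℝ)/2 + 1)]
      refine MeasureTheory.setIntegral_congr_fun measurableSet_Ioi (fun x hx => ?_)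
      rw [add_sub_cancel_right, mul_comm]
    have hlhs : ∫ x in Set.Ioi (0:ℝ), (Real.pi * x) ^ ((d:ℝ)/2) * Real.exp (-(Real.pi * x))
        = Real.pi ^ ((d:ℝ)/2) * ∫ x in Set.Ioi (0:ℝ), x ^ ((d:ℝ)/2) * Real.exp (-Real.pi * x) := by
      rw [← MeasureTheory.integral_const_mul]
      refine MeasureTheory.setIntegral_congr_fun measurableSet_Ioi (fun x hx => ?_)
      rw [Real.mul_rpow Real.pi_pos.le (le_of_lt hx)]
      ring_nf
    rw [hlhs, hgamma_eq, smul_eq_mul] at hscale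
    have hppos : (0:ℝ) < Real.pi ^ ((d:ℝ)/2) := Real.rpow_pos_of_pos Real.pi_pos _
    field_simp at hscale ⊢
    linarith [hscale]
  have hGle := gamma_le_aux d hd
  have hppos : (0:ℝ) < Real.pi ^ ((d:ℝ)/2) := Real.rpow_pos_of_pos Real.pi_pos _
  calc ∫ s in Set.Ioi (0:ℝ), ∑ p ∈ F, Set.indicator (Set.Ioi (‖p‖^2)) gg s
      ≤ ∫ s in Set.Ioi (0:ℝ),
          (3/lam)^d * Real.pi * (s ^ ((d:ℝ)/2) * Real.exp (-Real.pi * s)) := hmono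
    _ = (3/lam)^d * Real.pi * ((Real.pi ^ ((d:ℝ)/2))⁻¹ * Real.pi⁻¹
          * Real.Gamma ((d:ℝ)/2 + 1)) := by rw [hval, hGammaInt]
    _ = (3/lam)^d * (Real.pi ^ ((d:ℝ)/2))⁻¹ * Real.Gamma ((d:ℝ)/2 + 1) := by
        field_simp
    _ ≤ (3/lam)^d * (Real.pi ^ ((d:ℝ)/2))⁻¹
          * ((Real.exp 1 - 1) * (Real.pi * d / 9) ^ ((d:ℝ)/2)) := by
        apply mul_le_mul_of_nonneg_left hGle (by positivity)
    _ = (Real.exp 1 - 1) / τ ^ d := by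
        have h1 : (Real.pi * (d:ℝ) / 9) ^ ((d:ℝ)/2)
            = Real.pi ^ ((d:ℝ)/2) * (((d:ℝ)/9) ^ ((d:ℝ)/2)) := by
          rw [← Real.mul_rpow Real.pi_pos.le (by positivity)]
          congr 1; ring
        have h2 : (((d:ℝ))/9) ^ ((d:ℝ)/2) = (Real.sqrt d / 3) ^ d := by
          have h9 : Real.sqrt 9 = 3 := by
            rw [show (9:ℝ) = 3^2 by norm_num, Real.sqrt_sq (by norm_num : (0:ℝ) ≤ 3)]
          rw [show Real.sqrt (d:ℝ) / 3 = Real.sqrt ((d:ℝ)/9) by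
              rw [Real.sqrt_div (Nat.cast_nonneg d), h9],
            Real.sqrt_eq_rpow, ← Real.rpow_natCast (((d:ℝ)/9) ^ ((1:ℝ)/2)) d,
            ← Real.rpow_mul (by positivity)]
          congr 1; ring
        have h3 : (3/lam)^d * (Real.sqrt d / 3)^d = (1/τ)^d := by
          rw [← mul_pow]
          congr 1
          rw [hlam_def]
          have hsd : Real.sqrt (d:ℝ) ≠ 0 := ne_of_gt (Real.sqrt_pos.mpr hdpos)
          field_simp
        rw [h1, h2]
        rw [show (3/lam)^d * (Real.pi ^ ((d:ℝ)/2))⁻¹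
            * ((Real.exp 1 - 1) * (Real.pi ^ ((d:ℝ)/2) * (Real.sqrt d / 3) ^ d))
            = (Real.exp 1 - 1) * ((3/lam)^d * (Real.sqrt d / 3)^d)
              * ((Real.pi ^ ((d:ℝ)/2))⁻¹ * Real.pi ^ ((d:ℝ)/2)) by ring,
          inv_mul_cancel₀ (ne_of_gt hppos), mul_one, h3]
        rw [div_pow, one_pow]
        ring

lemma prod_embeddings_abs_eq {K : Type*} [Field K] [NumberField K] (z : K) :
    ∏ σ : K →+* ℂ, ‖σ z‖ = ((|Algebra.norm ℚ z| : ℚ) : ℝ) := by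
  have h := congrArg (fun w : ℂ => ‖w‖) (Algebra.norm_eq_prod_embeddings ℚ ℂ z)
  simp only [norm_prod] at h
  have h2 : ∏ σ : K →+* ℂ, ‖σ z‖ = ∏ φ : K →ₐ[ℚ] ℂ, ‖φ z‖ :=
    Fintype.prod_equiv (RingHom.equivRatAlgHom K ℂ) _ _
      (fun σ => by simp [RingHom.equivRatAlgHom_apply])
  rw [h2, ← h, eq_ratCast (algebraMap ℚ ℂ) (Algebra.norm ℚ z)]
  rw [Complex.norm_ratCast]
  push_cast
  ring

lemma norm_lower_bound {K : Type*} [Field K] [NumberField K]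
    (I : FractionalIdeal (𝓞 K)⁰ K) (hI : I ≠ 0) {z : K} (hz : z ∈ I) (hz0 : z ≠ 0) :
    FractionalIdeal.absNorm I ≤ |Algebra.norm ℚ z| := by
  have hspan : FractionalIdeal.spanSingleton (𝓞 K)⁰ z ≤ I :=
    (FractionalIdeal.spanSingleton_le_iff_mem).mpr hz
  have hIinv : I * I⁻¹ = 1 := mul_inv_cancel₀ hI
  have hle1 : FractionalIdeal.spanSingleton (𝓞 K)⁰ z * I⁻¹ ≤ 1 := by
    rw [← hIinv]
    exact mul_le_mul_left hspan I⁻¹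
  obtain ⟨J, hJ⟩ := FractionalIdeal.le_one_iff_exists_coeIdeal.mp hle1
  have hJ0 : J ≠ ⊥ := by
    rintro rfl
    rw [FractionalIdeal.coeIdeal_bot] at hJ
    have hinv0 : (I⁻¹ : FractionalIdeal (𝓞 K)⁰ K) ≠ 0 := by
      intro h0
      rw [h0, mul_zero] at hIinv
      exact one_ne_zero hIinv.symm
    have hz' : FractionalIdeal.spanSingleton (𝓞 K)⁰ z = 0 := by
      rcases mul_eq_zero.mp hJ.symm with h | h
      · exact h
      · exact absurd h hinv0
    exact hz0 (by simpa [FractionalIdeal.spanSingleton_eq_zero_iff] using hz')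
  have hspan_eq : FractionalIdeal.spanSingleton (𝓞 K)⁰ z = (J : FractionalIdeal (𝓞 K)⁰ K) * I := by
    rw [hJ, mul_assoc, mul_comm (I⁻¹) I, hIinv, mul_one]
  have habs : |Algebra.norm ℚ z| = (Ideal.absNorm J : ℚ) * FractionalIdeal.absNorm I := by
    calc |Algebra.norm ℚ z|
        = FractionalIdeal.absNorm (FractionalIdeal.spanSingleton (𝓞 K)⁰ z) :=
          (FractionalIdeal.absNorm_span_singleton (𝓞 K) z).symm
      _ = FractionalIdeal.absNorm ((J : FractionalIdeal (𝓞 K)⁰ K) * I) := by rw [hspan_eq]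
      _ = FractionalIdeal.absNorm ((J : FractionalIdeal (𝓞 K)⁰ K))
            * FractionalIdeal.absNorm I := map_mul _ _ _
      _ = (Ideal.absNorm J : ℚ) * FractionalIdeal.absNorm I := by
          rw [FractionalIdeal.coeIdeal_absNorm]
  rw [habs]
  have h1 : (1:ℚ) ≤ (Ideal.absNorm J : ℚ) := by
    have h2 : Ideal.absNorm J ≠ 0 := by
      rw [Ne, Ideal.absNorm_eq_zero_iff]
      exact hJ0
    exact_mod_cast Nat.one_le_iff_ne_zero.mpr h2
  nlinarith [FractionalIdeal.absNorm_nonneg (R := 𝓞 K) (K := K) I]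

open Module in
lemma sep_sq {K : Type*} [Field K] [NumberField K]
    (I : FractionalIdeal (𝓞 K)⁰ K) (hI : I ≠ 0)
    (c : (K →+* ℂ) → ℝ) (hc : ∀ σ, 0 < c σ) {z : K} (hz : z ∈ I) (hz0 : z ≠ 0) :
    (finrank ℚ K : ℝ) *
      ((((FractionalIdeal.absNorm I : ℝ)) * ∏ σ : K →+* ℂ, c σ) ^
        ((1:ℝ)/(finrank ℚ K))) ^ 2
      ≤ ∑ σ : K →+* ℂ, c σ ^ 2 * ‖σ z‖ ^ 2 := by
  set n := finrank ℚ K with hn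
  have hnpos : 0 < n := Module.finrank_pos
  have hnR : (0:ℝ) < n := by exact_mod_cast hnpos
  have hcard : Fintype.card (K →+* ℂ) = n := NumberField.Embeddings.card K ℂ
  set a : (K →+* ℂ) → ℝ := fun σ => c σ ^ 2 * ‖σ z‖ ^ 2 with ha
  have ha0 : ∀ σ, 0 ≤ a σ := fun σ => by rw [ha]; positivity
  have hAM := Real.geom_mean_le_arith_mean_weighted Finset.univ (fun _ => 1/(n:ℝ)) a
    (fun _ _ => by positivity)
    (by
      rw [Finset.sum_const, nsmul_eq_mul, Finset.card_univ, hcard]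
      field_simp)
    (fun σ _ => ha0 σ)
  have hprod_rpow : ∏ σ : K →+* ℂ, a σ ^ ((1:ℝ)/(n:ℝ))
      = (∏ σ : K →+* ℂ, a σ) ^ ((1:ℝ)/(n:ℝ)) :=
    Real.finset_prod_rpow Finset.univ a (fun σ _ => ha0 σ) _
  have hprod : ∏ σ : K →+* ℂ, a σ
      = ((∏ σ : K →+* ℂ, c σ) * ((|Algebra.norm ℚ z| : ℚ) : ℝ))^2 := by
    calc ∏ σ : K →+* ℂ, a σ = ∏ σ : K →+* ℂ, (c σ * ‖σ z‖)^2 :=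
        Finset.prod_congr rfl (fun σ _ => by rw [ha]; ring)
      _ = (∏ σ : K →+* ℂ, c σ * ‖σ z‖)^2 := by rw [Finset.prod_pow]
      _ = ((∏ σ : K →+* ℂ, c σ) * ∏ σ : K →+* ℂ, ‖σ z‖)^2 := by
          rw [Finset.prod_mul_distrib]
      _ = _ := by rw [prod_embeddings_abs_eq]
  set P : ℝ := (FractionalIdeal.absNorm I : ℝ) * ∏ σ : K →+* ℂ, c σ with hP
  have hprodc : (0:ℝ) < ∏ σ : K →+* ℂ, c σ := Finset.prod_pos (fun σ _ => hc σ)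
  have habs0 : (0:ℝ) < (FractionalIdeal.absNorm I : ℝ) := by
    have h2 : FractionalIdeal.absNorm I ≠ 0 := by
      rw [Ne, FractionalIdeal.absNorm_eq_zero_iff]
      exact hI
    have h3 := FractionalIdeal.absNorm_nonneg (R := 𝓞 K) (K := K) I
    have : (0:ℚ) < FractionalIdeal.absNorm I := lt_of_le_of_ne h3 (Ne.symm h2)
    exact_mod_cast this
  have hPpos : 0 < P := mul_pos habs0 hprodc
  have hNz : P ≤ (∏ σ : K →+* ℂ, c σ) * ((|Algebra.norm ℚ z| : ℚ) : ℝ) := by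
    rw [hP, mul_comm]
    refine mul_le_mul_of_nonneg_left ?_ hprodc.le
    exact_mod_cast norm_lower_bound I hI hz hz0
  have hkey : (P ^ ((1:ℝ)/(n:ℝ)))^2 ≤ (∏ σ : K →+* ℂ, a σ) ^ ((1:ℝ)/(n:ℝ)) := by
    have h1 : (P^2 : ℝ) ≤ ∏ σ : K →+* ℂ, a σ := by
      rw [hprod]
      exact pow_le_pow_left₀ hPpos.le hNz 2
    have e1 : (P ^ ((1:ℝ)/(n:ℝ)))^2 = P ^ (((1:ℝ)/(n:ℝ))*2) := by
      rw [← Real.rpow_natCast (P ^ ((1:ℝ)/(n:ℝ))) 2, ← Real.rpow_mul hPpos.le]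
      norm_num
    have e2 : (P^2) ^ ((1:ℝ)/(n:ℝ)) = P ^ (2*((1:ℝ)/(n:ℝ))) := by
      rw [← Real.rpow_natCast P 2, ← Real.rpow_mul hPpos.le]
      norm_num
    have e3 : (P ^ ((1:ℝ)/(n:ℝ)))^2 = (P^2) ^ ((1:ℝ)/(n:ℝ)) := by
      rw [e1, e2, mul_comm]
    rw [e3]
    exact Real.rpow_le_rpow (by positivity) h1 (by positivity)
  calc (n:ℝ) * (P ^ ((1:ℝ)/(n:ℝ)))^2
      ≤ (n:ℝ) * ((∏ σ : K →+* ℂ, a σ) ^ ((1:ℝ)/(n:ℝ))) :=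
        mul_le_mul_of_nonneg_left hkey (Nat.cast_nonneg n)
    _ ≤ (n:ℝ) * ∑ σ : K →+* ℂ, (1/(n:ℝ)) * a σ := by
        refine mul_le_mul_of_nonneg_left ?_ (Nat.cast_nonneg n)
        rw [← hprod_rpow]
        exact hAM
    _ = ∑ σ : K →+* ℂ, a σ := by
        rw [← Finset.mul_sum, ← mul_assoc]
        field_simp

set_option maxHeartbeats 1000000 in
set_option synthInstance.maxHeartbeats 400000 in
open Module Finset in
/-- **Bost's upper bound for `h⁰` of a Hermitian fractional ideal of nonnegative degree.**
Let `(I, (c_σ))` be a Hermitian fractional ideal over a number field `K` of degree `d`.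
If `d̂eg(I, c) ≥ 0`, then `h⁰(I, c) ≤ 1 + d̂eg(I, c)`. -/
theorem hermitianH0_le_of_deg_nonneg
    (K : Type*) [Field K] [NumberField K]
    (d : ℕ) (hd : d = Module.finrank ℚ K)
    (I : FractionalIdeal (𝓞 K)⁰ K) (hI : I ≠ 0)
    (c : (K →+* ℂ) → ℝ) (hc : ∀ σ, 0 < c σ)
    (hconj : ∀ σ : K →+* ℂ, c ((starRingEnd ℂ).comp σ) = c σ)
    (hdeg : 0 ≤ hermitianDeg K I c) :
    hermitianH0 K I c ≤ 1 + hermitianDeg K I c := by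
  classical
  have hd1 : 1 ≤ d := hd ▸ Module.finrank_pos
  have hdpos : (0:ℝ) < d := by exact_mod_cast hd1
  have habs0 : (0:ℝ) < (FractionalIdeal.absNorm I : ℝ) := by
    have h2 : FractionalIdeal.absNorm I ≠ 0 := by
      rw [Ne, FractionalIdeal.absNorm_eq_zero_iff]; exact hI
    have h3 := FractionalIdeal.absNorm_nonneg (R := 𝓞 K) (K := K) I
    have h4 : (0:ℚ) < FractionalIdeal.absNorm I := lt_of_le_of_ne h3 (Ne.symm h2)
    exact_mod_cast h4
  have hprodc : (0:ℝ) < ∏ σ : K →+* ℂ, c σ := Finset.prod_pos fun σ _ => hc σ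
  set P : ℝ := (FractionalIdeal.absNorm I : ℝ) * ∏ σ : K →+* ℂ, c σ with hP
  have hPpos : 0 < P := mul_pos habs0 hprodc
  have hlogP : Real.log P = - hermitianDeg K I c := by
    rw [hermitianDeg, hP, Real.log_mul (ne_of_gt habs0) (ne_of_gt hprodc),
      Real.log_prod (fun σ _ => ne_of_gt (hc σ))]
    ring
  have hP_eq : P = Real.exp (-(hermitianDeg K I c)) := by
    rw [← hlogP, Real.exp_log hPpos]
  have hPle1 : P ≤ 1 := by
    rw [hP_eq, show (1:ℝ) = Real.exp 0 by rw [Real.exp_zero], Real.exp_le_exp]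
    linarith
  set τ : ℝ := P ^ ((1:ℝ)/(d:ℝ)) with hτdef
  have hτpos : 0 < τ := Real.rpow_pos_of_pos hPpos _
  have hτ1 : τ ≤ 1 := Real.rpow_le_one hPpos.le hPle1 (by positivity)
  have hτd : τ ^ d = P := by
    rw [hτdef, ← Real.rpow_natCast (P ^ ((1:ℝ)/(d:ℝ))) d, ← Real.rpow_mul hPpos.le,
      show (1:ℝ)/(d:ℝ) * (d:ℕ) = 1 by field_simp, Real.rpow_one]
  -- the embedding v into Euclidean space
  set v : K → EuclideanSpace ℂ (K →+* ℂ) :=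
    fun x => (WithLp.equiv 2 ((K →+* ℂ) → ℂ)).symm (fun σ => (c σ : ℂ) * σ x) with hv
  have hvadd : ∀ x y : K, v (x + y) = v x + v y := by
    intro x y
    simp only [hv]
    rw [WithLp.equiv_symm_apply, ← WithLp.toLp_add]
    congr 1
    funext σ
    simp only [Pi.add_apply, map_add]
    ring
  have hv0 : v 0 = 0 := by
    rw [hv]
    simp only [map_zero, mul_zero]
    rfl
  set vh : K →+ EuclideanSpace ℂ (K →+* ℂ) :=
    { toFun := v, map_zero' := hv0, map_add' := hvadd } with hvh
  have hsmul : ∀ (q : ℚ) (x : K), v (q • x) = (q:ℝ) • v x := by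
    intro q x
    simp only [hv]
    rw [WithLp.equiv_symm_apply, ← WithLp.toLp_smul]
    congr 1
    funext σ
    simp only [Pi.smul_apply, Complex.real_smul]
    rw [Rat.smul_def, map_mul, map_ratCast]
    push_cast
    ring
  have hnormv : ∀ x : K, ‖v x‖^2 = ∑ σ : K →+* ℂ, c σ ^ 2 * ‖σ x‖ ^ 2 := by
    intro x
    rw [EuclideanSpace.norm_eq, Real.sq_sqrt (by positivity)]
    refine Finset.sum_congr rfl (fun σ _ => ?_)
    simp only [hv]
    rw [WithLp.equiv_symm_apply, PiLp.toLp_apply]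
    rw [norm_mul, Complex.norm_real, Real.norm_eq_abs, abs_of_pos (hc σ)]
    ring
  have hvinj : Function.Injective v := by
    intro x y hxy
    obtain ⟨σ⟩ := (inferInstance : Nonempty (K →+* ℂ))
    have h1 : (c σ : ℂ) * σ x = (c σ : ℂ) * σ y := by
      have h2 := congrArg (fun w => (WithLp.equiv 2 ((K →+* ℂ) → ℂ)) w σ) hxy
      simpa [hv] using h2
    have hcσ : (c σ : ℂ) ≠ 0 := Complex.ofReal_ne_zero.mpr (ne_of_gt (hc σ))
    exact σ.injective (mul_left_cancel₀ hcσ h1)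
  -- the span W
  set b := Module.finBasis ℚ K with hb
  set W : Submodule ℝ (EuclideanSpace ℂ (K →+* ℂ)) :=
    Submodule.span ℝ (Set.range (fun i => v (b i))) with hW
  have hvW : ∀ x : K, v x ∈ W := by
    intro x
    have hvsum : v x = ∑ i, ((b.repr x i : ℚ) : ℝ) • v (b i) := by
      conv_lhs => rw [show x = ∑ i, b.repr x i • b i from (b.sum_repr x).symm]
      rw [show v (∑ i, b.repr x i • b i) = vh (∑ i, b.repr x i • b i) from rfl, map_sum vh]
      exact Finset.sum_congr rfl (fun i _ => hsmul _ _)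
    rw [hvsum]
    exact Submodule.sum_mem _ (fun i _ =>
      Submodule.smul_mem _ _ (Submodule.subset_span ⟨i, rfl⟩))
  have hrankW : finrank ℝ W ≤ d := by
    have h1 : finrank ℝ W ≤ (Set.range (fun i => v (b i))).toFinset.card := by
      rw [hW]
      exact finrank_span_le_card _
    have h2 : (Set.range (fun i => v (b i))).toFinset.card ≤ finrank ℚ K := by
      rw [Set.toFinset_range]
      exact (Finset.card_image_le).trans (by simp)
    omega
  -- separation bounds
  have hq_lower : ∀ z : K, z ∈ I → z ≠ 0 → Real.sqrt d * τ ≤ ‖v z‖ := by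
    intro z hzI hz0
    have hsep := sep_sq I hI c hc hzI hz0
    rw [← hP] at hsep
    rw [← hd] at hsep
    have h2 : (Real.sqrt d * τ)^2 ≤ ‖v z‖^2 := by
      rw [hnormv z, mul_pow, Real.sq_sqrt hdpos.le]
      calc (d:ℝ) * τ^2 = (d:ℝ) * (P ^ ((1:ℝ)/(d:ℝ)))^2 := by rw [hτdef]
        _ ≤ _ := hsep
    calc Real.sqrt d * τ = Real.sqrt ((Real.sqrt d * τ)^2) := by
          rw [Real.sqrt_sq (by positivity)]
      _ ≤ Real.sqrt (‖v z‖^2) := Real.sqrt_le_sqrt h2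
      _ = ‖v z‖ := Real.sqrt_sq (norm_nonneg _)
  -- finite sums bound
  set f : ↥I → ℝ :=
    fun x => Real.exp (-Real.pi * ∑ σ : K →+* ℂ, c σ ^ 2 * ‖σ (x : K)‖ ^ 2) with hf
  have hf0 : ∀ x, 0 ≤ f x := fun x => (Real.exp_pos _).le
  have hz0mem : (0:K) ∈ I := FractionalIdeal.mem_coe.mp (Submodule.zero_mem _)
  set z0 : ↥I := ⟨(0:K), hz0mem⟩ with hz0
  have hsubmem : ∀ x y : K, x ∈ I → y ∈ I → x - y ∈ I := fun x y hx hy =>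
    FractionalIdeal.mem_coe.mp (Submodule.sub_mem _ (FractionalIdeal.mem_coe.mpr hx)
      (FractionalIdeal.mem_coe.mpr hy))
  have hfzero : f z0 = 1 := by
    rw [hf]
    simp [hz0]
  have hkey : ∀ s : Finset ↥I, ∑ x ∈ s, f x ≤ Real.exp 1 / τ ^ d := by
    intro s
    have hsubset : ∑ x ∈ s, f x ≤ ∑ x ∈ insert z0 s, f x :=
      Finset.sum_le_sum_of_subset_of_nonneg (Finset.subset_insert _ _) (fun x _ _ => hf0 x)
    set t := (insert z0 s).erase z0 with ht
    have hsplit : ∑ x ∈ insert z0 s, f x = f z0 + ∑ x ∈ t, f x :=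
      (Finset.add_sum_erase _ f (Finset.mem_insert_self z0 s)).symm
    -- the image of t in W
    set pmap : ↥I → ↥W := fun x => ⟨v (x : K), hvW _⟩ with hpmap
    have hpinj : ∀ x y : ↥I, pmap x = pmap y → x = y := by
      intro x y hxy
      have h1 : v (x : K) = v (y : K) := congrArg Subtype.val hxy
      exact Subtype.ext (hvinj h1)
    have hsum_img : ∑ p ∈ t.image pmap, Real.exp (-Real.pi * ‖p‖^2) = ∑ x ∈ t, f x := by
      rw [Finset.sum_image (fun x _ y _ h => hpinj x y h)]
      refine Finset.sum_congr rfl (fun x hx => ?_)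
      rw [hf]
      congr 2
      exact hnormv (x : K)
    have htprop : ∀ x : ↥I, x ∈ t → ((x : K) ∈ I ∧ (x : K) ≠ 0) := by
      intro x hx
      refine ⟨x.2, ?_⟩
      have h1 : x ≠ z0 := Finset.ne_of_mem_erase hx
      exact fun h => h1 (Subtype.ext h)
    have hbound : ∑ p ∈ t.image pmap, Real.exp (-Real.pi * ‖p‖^2)
        ≤ (Real.exp 1 - 1) / τ ^ d := by
      apply sum_exp_le d hd1 hrankW hτpos
      · -- separation
        intro p hp q hq hpq
        obtain ⟨x, hxt, rfl⟩ := Finset.mem_image.mp hp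
        obtain ⟨y, hyt, rfl⟩ := Finset.mem_image.mp hq
        obtain ⟨hxI, hx0⟩ := htprop x hxt
        obtain ⟨hyI, hy0⟩ := htprop y hyt
        have hxy : (x : K) ≠ (y : K) := by
          intro h
          exact hpq (by rw [hpmap]; exact congrArg pmap (Subtype.ext h))
        have hzI : (x : K) - (y : K) ∈ I := hsubmem _ _ hxI hyI
        have hz0 : (x : K) - (y : K) ≠ 0 := sub_ne_zero.mpr hxy
        have h1 := hq_lower _ hzI hz0
        have h2 : v ((x : K) - (y : K)) = v (x : K) - v (y : K) := map_sub vh _ _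
        rw [h2] at h1
        calc Real.sqrt d * τ ≤ ‖v (x : K) - v (y : K)‖ := h1
          _ = dist (pmap x) (pmap y) := by
              rw [Subtype.dist_eq, dist_eq_norm]
      · -- minimum norm
        intro p hp
        obtain ⟨x, hxt, rfl⟩ := Finset.mem_image.mp hp
        obtain ⟨hxI, hx0⟩ := htprop x hxt
        exact hq_lower _ hxI hx0
    have h1τ : (1:ℝ) ≤ 1 / τ ^ d := by
      rw [le_div_iff₀ (by positivity), one_mul]
      calc τ ^ d ≤ 1 ^ d := pow_le_pow_left₀ hτpos.le hτ1 d
        _ = 1 := one_pow d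
    calc ∑ x ∈ s, f x ≤ f z0 + ∑ x ∈ t, f x := by rw [← hsplit]; exact hsubset
      _ = 1 + ∑ p ∈ t.image pmap, Real.exp (-Real.pi * ‖p‖^2) := by
          rw [hfzero, hsum_img]
      _ ≤ 1/τ^d + (Real.exp 1 - 1)/τ^d := by
          have := hbound
          gcongr
      _ = Real.exp 1 / τ ^ d := by ring
  -- conclude via tsum
  have hsummable : Summable f := summable_of_sum_le hf0 hkey
  have htsum_le : (∑' x : ↥I, f x) ≤ Real.exp 1 / τ ^ d := Summable.tsum_le_of_sum_le hsummable hkey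
  have htsum_pos : 0 < ∑' x : ↥I, f x := by
    have h1 : f z0 ≤ ∑' x : ↥I, f x := Summable.le_tsum hsummable z0 (fun j _ => hf0 j)
    rw [hfzero] at h1
    linarith
  unfold hermitianH0
  rw [show (∑' x : ↥I,
      Real.exp (-Real.pi * ∑ σ : K →+* ℂ, c σ ^ 2 * ‖σ (x : K)‖ ^ 2))
      = ∑' x : ↥I, f x from rfl]
  rw [Real.log_le_iff_le_exp htsum_pos]
  calc (∑' x : ↥I, f x) ≤ Real.exp 1 / τ ^ d := htsum_le
    _ = Real.exp (1 + hermitianDeg K I c) := by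
        rw [hτd, hP_eq, Real.exp_add, Real.exp_neg, div_eq_mul_inv, inv_inv]
end

section
/- Let K be a number field of degree d over ℚ with discriminant D_K, let I be a nonzero fractional ideal of K, and for each field embedding σ : K ↪ ℂ let c_σ be a positive real number with c_{σ̄} = c_σ. Equip the real vector space K ⊗_ℚ ℝ with the symmetric bilinear form determined by ⟨x,y⟩ := ∑_{σ:K↪ℂ} c_σ² · σ(x) · conj(σ(y)) for x,y ∈ K (which is real-valued and positive definite). Then I is a full-rank ℤ-lattice of rank d in K ⊗_ℚ ℝ and covol(I) = N(I) · (∏_{σ:K↪ℂ} c_σ) · √|D_K|; equivalently, −log covol(I) = d̂eg(I,c) − (1/2)·log|D_K|, where d̂eg(I,c) := −log N(I) − ∑_{σ:K↪ℂ} log c_σ and N(I) is the absolute norm of I. -/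
open MeasureTheory Module Matrix
open scoped NumberField nonZeroDivisors

theorem covolume_aux
    (K : Type*) [Field K] [NumberField K]
    (d : ℕ) (hd : d = Module.finrank ℚ K)
    (I : FractionalIdeal (𝓞 K)⁰ K) (hI : I ≠ 0)
    (c : (K →+* ℂ) → ℝ) (hc : ∀ σ, 0 < c σ)
    (E : Type*) [NormedAddCommGroup E] [InnerProductSpace ℝ E] [FiniteDimensional ℝ E]
    [MeasurableSpace E] [BorelSpace E]
    (ι : K →+ E) (hlin : ∀ (q : ℚ) (x : K), ι (q • x) = (q : ℝ) • ι x)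
    (hspan : Submodule.span ℝ (Set.range ι) = ⊤)
    (hdim : Module.finrank ℝ E = d)
    (hinner : ∀ x y : K,
      ((inner ℝ (ι x) (ι y) : ℝ) : ℂ) =
        ∑ σ : K →+* ℂ, (c σ : ℂ) ^ 2 * σ x * (starRingEnd ℂ) (σ y))
    (κ : Type*) [Fintype κ] (b : Basis κ ℚ K)
    (hbI : (I : Set K) = (Submodule.span ℤ (Set.range ⇑b) : Set K))
    (hbdet : ∀ e' : Free.ChooseBasisIndex ℤ (𝓞 K) ≃ κ,
      |(NumberField.integralBasis K).det (⇑b ∘ ⇑e')| = FractionalIdeal.absNorm I) :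
    DiscreteTopology (Submodule.span ℤ (ι '' (I : Set K))) ∧
      Submodule.span ℝ ((Submodule.span ℤ (ι '' (I : Set K)) : Submodule ℤ E) : Set E) = ⊤ ∧
      Module.finrank ℤ (Submodule.span ℤ (ι '' (I : Set K))) = d ∧
      ZLattice.covolume (Submodule.span ℤ (ι '' (I : Set K))) volume =
        (FractionalIdeal.absNorm I : ℝ) * (∏ σ : K →+* ℂ, c σ) *
          Real.sqrt |(NumberField.discr K : ℝ)| := by
  classical
  have hcardS : Fintype.card (K →+* ℂ) = d := by
    rw [NumberField.Embeddings.card, hd]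
  have hcardI : Fintype.card κ = d := by
    rw [← finrank_eq_card_basis b, ← hd]
  let e : κ ≃ (K →+* ℂ) := Fintype.equivOfCardEq (by rw [hcardI, hcardS])
  set β : (K →+* ℂ) → K := fun σ => b (e.symm σ) with hβ
  -- spanning
  have hsp : ⊤ ≤ Submodule.span ℝ (Set.range (⇑ι ∘ β)) := by
    rw [← hspan]
    refine Submodule.span_le.2 ?_
    rintro _ ⟨y, rfl⟩
    have hy : ι y = ∑ i, ((b.repr y i : ℝ)) • ι (b i) := by
      conv_lhs => rw [← b.sum_repr y, map_sum]
      exact Finset.sum_congr rfl fun i _ => hlin _ _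
    rw [hy]
    exact Submodule.sum_mem _ fun i _ => Submodule.smul_mem _ _
      (Submodule.subset_span ⟨e i, by simp [hβ]⟩)
  set bE : Basis (K →+* ℂ) ℝ E :=
    basisOfTopLeSpanOfCardEqFinrank (⇑ι ∘ β) hsp (by rw [hcardS, hdim]) with hbEdef
  have hbE : ⇑bE = ⇑ι ∘ β := coe_basisOfTopLeSpanOfCardEqFinrank _ _ _
  -- lattice identification
  have hL : Submodule.span ℤ (ι '' (I : Set K)) = Submodule.span ℤ (Set.range ⇑bE) := by
    rw [hbE]
    have hrangeβ : Set.range β = Set.range ⇑b := by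
      ext x
      constructor
      · rintro ⟨σ, rfl⟩; exact ⟨_, rfl⟩
      · rintro ⟨i, rfl⟩; exact ⟨e i, by simp [hβ]⟩
    have h2 : Set.range (⇑ι ∘ β) = ⇑ι.toIntLinearMap '' Set.range ⇑b := by
      rw [Set.range_comp, hrangeβ, AddMonoidHom.coe_toIntLinearMap]
    have hcoe : ⇑ι = ⇑ι.toIntLinearMap := rfl
    rw [hbI, h2, hcoe, Submodule.span_image, Submodule.span_image, Submodule.span_eq]
  rw [hL]
  refine ⟨inferInstance, ZSpan.span_top bE, ?_, ?_⟩
  · rw [finrank_eq_card_basis (bE.restrictScalars ℤ), hcardS]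
  -- the covolume computation
  let b₀ : OrthonormalBasis (K →+* ℂ) ℝ E :=
    (stdOrthonormalBasis ℝ E).reindex (Fintype.equivOfCardEq (by rw [Fintype.card_fin, hdim, hcardS]))
  have : IsZLattice ℝ (Submodule.span ℤ (Set.range ⇑bE)) := inferInstance
  have hcov : ZLattice.covolume (Submodule.span ℤ (Set.range ⇑bE)) volume
      = |b₀.toBasis.det ⇑bE| := by
    rw [ZLattice.covolume_eq_measure_fundamentalDomain _ _
      (ZSpan.isAddFundamentalDomain bE volume),
      ZSpan.measureReal_fundamentalDomain bE volume b₀.toBasis, measureReal_def,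
      measure_congr (ZSpan.fundamentalDomain_ae_parallelepiped b₀.toBasis volume),
      show parallelepiped ⇑b₀.toBasis = parallelepiped ⇑b₀ by rw [b₀.coe_toBasis],
      b₀.volume_parallelepiped, ENNReal.toReal_one, mul_one]
  set A : Matrix (K →+* ℂ) (K →+* ℂ) ℝ := b₀.toBasis.toMatrix ⇑bE with hA
  have hdetA : b₀.toBasis.det ⇑bE = A.det := Basis.det_apply _ _
  set G : Matrix (K →+* ℂ) (K →+* ℂ) ℝ :=
    Matrix.of (fun i j => (inner ℝ (ι (β i)) (ι (β j)) : ℝ)) with hG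
  have hGA : G = Aᵀ * A := by
    ext i j
    rw [Matrix.mul_apply]
    simp only [hG, hA, Matrix.of_apply, Matrix.transpose_apply, Basis.toMatrix_apply,
      OrthonormalBasis.coe_toBasis_repr_apply, OrthonormalBasis.repr_apply_apply]
    have h1 : ∀ k, (inner ℝ (b₀ k) (bE i) : ℝ) * (inner ℝ (b₀ k) (bE j) : ℝ)
        = (inner ℝ (bE i) (b₀ k) : ℝ) * (inner ℝ (b₀ k) (bE j) : ℝ) := fun k => by
      rw [real_inner_comm (b₀ k) (bE i)]
    rw [Finset.sum_congr rfl (fun k _ => h1 k), b₀.sum_inner_mul_inner (bE i) (bE j)]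
    have : bE i = ι (β i) := by rw [hbE]; rfl
    have h2 : bE j = ι (β j) := by rw [hbE]; rfl
    rw [this, h2]
  have hdetGA : G.det = A.det ^ 2 := by
    rw [hGA, Matrix.det_mul, Matrix.det_transpose, sq]
  set M : Matrix (K →+* ℂ) (K →+* ℂ) ℂ := Matrix.of (fun i σ => σ (β i)) with hM
  have hGM : G.map (Complex.ofRealHom) = M * Matrix.diagonal (fun σ => (c σ : ℂ) ^ 2) * Mᴴ := by
    ext i j
    rw [Matrix.mul_assoc, Matrix.mul_apply]
    simp only [Matrix.map_apply, hG, hM, Matrix.of_apply, Matrix.diagonal_mul,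
      Matrix.conjTranspose_apply]
    rw [show (Complex.ofRealHom (inner ℝ (ι (β i)) (ι (β j)) : ℝ) : ℂ)
      = ((inner ℝ (ι (β i)) (ι (β j)) : ℝ) : ℂ) from rfl, hinner (β i) (β j)]
    refine Finset.sum_congr rfl fun σ _ => ?_
    simp only [starRingEnd_apply]
    ring
  have hdetGC : ((G.det : ℝ) : ℂ)
      = (∏ σ : K →+* ℂ, (c σ : ℂ) ^ 2) * ((Complex.normSq M.det : ℝ) : ℂ) := by
    have h1 : ((G.det : ℝ) : ℂ) = (G.map Complex.ofRealHom).det :=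
      RingHom.map_det Complex.ofRealHom G
    rw [h1, hGM, Matrix.det_mul, Matrix.det_mul, Matrix.det_diagonal,
      Matrix.det_conjTranspose, mul_comm M.det, mul_assoc]
    congr 1
    rw [← Complex.mul_conj]
    rfl
  -- the integral basis side
  have hcard0 : Fintype.card (Free.ChooseBasisIndex ℤ (𝓞 K)) = Fintype.card (K →+* ℂ) := by
    rw [← finrank_eq_card_basis (NumberField.integralBasis K), NumberField.Embeddings.card]
  let e₀ : Free.ChooseBasisIndex ℤ (𝓞 K) ≃ (K →+* ℂ) := Fintype.equivOfCardEq hcard0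
  set B := NumberField.integralBasis K with hB
  set M₀ : Matrix (K →+* ℂ) (K →+* ℂ) ℂ := Matrix.of (fun j σ => σ (B (e₀.symm j))) with hM₀
  set Q : Matrix (K →+* ℂ) (K →+* ℂ) ℚ := (B.reindex e₀).toMatrix β with hQ
  have hMQ : M = (Q.map (algebraMap ℚ ℂ))ᵀ * M₀ := by
    ext i σ
    rw [Matrix.mul_apply]
    simp only [hM, hM₀, hQ, Matrix.of_apply, Matrix.transpose_apply, Matrix.map_apply,
      Basis.toMatrix_apply]
    conv_lhs => rw [← (B.reindex e₀).sum_repr (β i)]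
    rw [map_sum]
    refine Finset.sum_congr rfl fun j _ => ?_
    rw [Basis.reindex_apply, Rat.smul_def, _root_.map_mul, map_ratCast]
    simp [eq_ratCast]
  have hdetMQ : M.det = (algebraMap ℚ ℂ Q.det) * M₀.det := by
    rw [hMQ, Matrix.det_mul, Matrix.det_transpose, ← RingHom.mapMatrix_apply, ← RingHom.map_det]
  have hQdet : |Q.det| = FractionalIdeal.absNorm I := by
    have h1 : Q.det = B.det (β ∘ ⇑e₀) := by
      rw [hQ, ← Basis.det_apply, Basis.det_reindex]
    have h2 : β ∘ ⇑e₀ = ⇑b ∘ ⇑(e₀.trans e.symm) := by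
      funext j; simp [hβ]
    rw [h1, h2]
    exact hbdet (e₀.trans e.symm)
  have hM₀sq : M₀.det ^ 2 = ((NumberField.discr K : ℝ) : ℂ) := by
    have he' : M₀ = (Algebra.embeddingsMatrixReindex ℚ ℂ ⇑B
        (e₀.trans (RingHom.equivRatAlgHom K ℂ))).submatrix ⇑e₀.symm ⇑e₀.symm := by
      ext j σ
      simp only [hM₀, Matrix.of_apply, Matrix.submatrix_apply,
        Algebra.embeddingsMatrixReindex, Algebra.embeddingsMatrix, Matrix.reindex_apply,
        Equiv.refl_symm, Equiv.symm_symm, Equiv.coe_refl, Equiv.coe_trans, Function.comp_apply]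
      simp only [Equiv.apply_symm_apply, RingHom.equivRatAlgHom_apply]
      rfl
    rw [he', Matrix.det_submatrix_equiv_self,
      ← Algebra.discr_eq_det_embeddingsMatrixReindex_pow_two ℚ ℂ ⇑B
        (e₀.trans (RingHom.equivRatAlgHom K ℂ))]
    rw [hB, ← NumberField.coe_discr]
    simp [eq_ratCast]
  have hnormSqM₀ : (Complex.normSq M₀.det : ℝ) = |(NumberField.discr K : ℝ)| := by
    have h2 : ‖M₀.det‖ ^ 2 = ‖(((NumberField.discr K : ℝ) : ℂ))‖ := by
      rw [← norm_pow, hM₀sq]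
    rw [Complex.normSq_eq_norm_sq, h2, Complex.norm_real, Real.norm_eq_abs]
  -- assembling the real determinant identity
  have hdetG : G.det
      = (∏ σ : K →+* ℂ, c σ ^ 2) * ((FractionalIdeal.absNorm I : ℝ)) ^ 2
        * |(NumberField.discr K : ℝ)| := by
    apply Complex.ofReal_injective
    rw [hdetGC, hdetMQ, _root_.map_mul]
    have h3 : Complex.normSq (algebraMap ℚ ℂ Q.det) = ((FractionalIdeal.absNorm I : ℝ)) ^ 2 := by
      rw [show algebraMap ℚ ℂ Q.det = ((Q.det : ℝ) : ℂ) by rw [eq_ratCast, Complex.ofReal_ratCast],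
        Complex.normSq_ofReal, ← hQdet]
      push_cast
      rw [← sq, sq_abs]
    rw [h3, hnormSqM₀]
    push_cast
    ring
  -- conclusion
  have hN0 : (0 : ℝ) ≤ (FractionalIdeal.absNorm I : ℝ) := by
    exact_mod_cast FractionalIdeal.absNorm_nonneg I
  have hc0 : (0 : ℝ) ≤ ∏ σ : K →+* ℂ, c σ := Finset.prod_nonneg fun σ _ => (hc σ).le
  rw [hcov, hdetA, ← Real.sqrt_sq_eq_abs, ← hdetGA, hdetG]
  have h4 : (∏ σ : K →+* ℂ, c σ ^ 2) * ((FractionalIdeal.absNorm I : ℝ)) ^ 2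
      * |(NumberField.discr K : ℝ)|
      = ((FractionalIdeal.absNorm I : ℝ) * ∏ σ : K →+* ℂ, c σ) ^ 2
        * |(NumberField.discr K : ℝ)| := by
    rw [Finset.prod_pow]
    ring
  rw [h4, Real.sqrt_mul (sq_nonneg _), Real.sqrt_sq (mul_nonneg hN0 hc0)]

/-- **Covolume of a Hermitian fractional ideal in `K ⊗_ℚ ℝ`.**
Let `K` be a number field of degree `d` over `ℚ` with discriminant `D_K`, let `I` be a nonzero
fractional ideal of `K`, and for each embedding `σ : K ↪ ℂ` let `c_σ > 0` with `c_{σ̄} = c_σ`.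
Equip `K ⊗_ℚ ℝ` (here: a real inner product space `E` together with an injective `ℚ`-linear map
`ι : K → E` with image spanning `E` over `ℝ` and `dim_ℝ E = d`) with the inner product determined
by `⟪x, y⟫ = ∑_{σ : K ↪ ℂ} c_σ² σ(x) conj(σ(y))`.  Then `I` is a full-rank `ℤ`-lattice of rank
`d` in `K ⊗_ℚ ℝ` and `covol(I) = N(I) ⬝ (∏_σ c_σ) ⬝ √|D_K|`; equivalently,
`-log covol(I) = d̂eg(I, c) - (1/2) log |D_K|` with
`d̂eg(I, c) = -log N(I) - ∑_σ log c_σ`. -/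
theorem covolume_fractionalIdeal
    (K : Type*) [Field K] [NumberField K]
    (d : ℕ) (hd : d = Module.finrank ℚ K)
    (I : FractionalIdeal (𝓞 K)⁰ K) (hI : I ≠ 0)
    (c : (K →+* ℂ) → ℝ) (hc : ∀ σ, 0 < c σ)
    (hconj : ∀ σ : K →+* ℂ, c ((starRingEnd ℂ).comp σ) = c σ)
    (E : Type*) [NormedAddCommGroup E] [InnerProductSpace ℝ E] [FiniteDimensional ℝ E]
    [MeasurableSpace E] [BorelSpace E]
    (ι : K →+ E) (hlin : ∀ (q : ℚ) (x : K), ι (q • x) = (q : ℝ) • ι x)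
    (hinj : Function.Injective ι)
    (hspan : Submodule.span ℝ (Set.range ι) = ⊤)
    (hdim : Module.finrank ℝ E = d)
    (hinner : ∀ x y : K,
      ((inner ℝ (ι x) (ι y) : ℝ) : ℂ) =
        ∑ σ : K →+* ℂ, (c σ : ℂ) ^ 2 * σ x * (starRingEnd ℂ) (σ y)) :
    DiscreteTopology (Submodule.span ℤ (ι '' (I : Set K))) ∧
      Submodule.span ℝ ((Submodule.span ℤ (ι '' (I : Set K)) : Submodule ℤ E) : Set E) = ⊤ ∧
      Module.finrank ℤ (Submodule.span ℤ (ι '' (I : Set K))) = d ∧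
      ZLattice.covolume (Submodule.span ℤ (ι '' (I : Set K))) volume =
        (FractionalIdeal.absNorm I : ℝ) * (∏ σ : K →+* ℂ, c σ) *
          Real.sqrt |(NumberField.discr K : ℝ)| ∧
      -Real.log (ZLattice.covolume (Submodule.span ℤ (ι '' (I : Set K))) volume) =
        (-Real.log (FractionalIdeal.absNorm I : ℝ) - ∑ σ : K →+* ℂ, Real.log (c σ)) -
          (1 / 2) * Real.log |(NumberField.discr K : ℝ)| := by
  classical
  have hbI : (I : Set K) =
      (Submodule.span ℤ (Set.range ⇑(NumberField.basisOfFractionalIdeal K (Units.mk0 I hI)))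
        : Set K) := by
    ext x
    simp only [SetLike.mem_coe]
    exact (NumberField.mem_span_basisOfFractionalIdeal K (I := Units.mk0 I hI) (x := x)).symm
  have hbdet : ∀ e' : Free.ChooseBasisIndex ℤ (𝓞 K) ≃ _,
      |(NumberField.integralBasis K).det
        (⇑(NumberField.basisOfFractionalIdeal K (Units.mk0 I hI)) ∘ ⇑e')| =
        FractionalIdeal.absNorm I := by
    intro e'
    have := NumberField.det_basisOfFractionalIdeal_eq_absNorm K (Units.mk0 I hI) e'
    rw [Basis.coe_reindex] at this
    exact this
  obtain ⟨h1, h2, h3, h4⟩ := covolume_aux K d hd I hI c hc E ι hlin hspan hdim hinner _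
    (NumberField.basisOfFractionalIdeal K (Units.mk0 I hI)) hbI hbdet
  refine ⟨h1, h2, h3, h4, ?_⟩
  -- logarithm part
  have hN : (0 : ℝ) < (FractionalIdeal.absNorm I : ℝ) := by
    rcases lt_or_eq_of_le (FractionalIdeal.absNorm_nonneg I) with h | h
    · exact_mod_cast h
    · exact absurd (FractionalIdeal.absNorm_eq_zero_iff.mp h.symm) hI
  have hD : (0 : ℝ) < |(NumberField.discr K : ℝ)| := by
    rw [abs_pos]
    exact_mod_cast NumberField.discr_ne_zero K
  have hprod : (0 : ℝ) < ∏ σ : K →+* ℂ, c σ := Finset.prod_pos fun σ _ => hc σ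
  rw [h4, Real.log_mul (by positivity) (by positivity), Real.log_mul (by positivity)
    (by positivity), Real.log_sqrt hD.le, Real.log_prod (fun σ _ => (hc σ).ne')]
  ring
end
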